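/- Let X and Y be real normed vector spaces with X infinite-dimensional, let T : X → Y be a bounded linear operator, and let E be a dense linear subspace of X. Then τ(T|_E) = τ(T), where τ(T|_E) is computed with E in place of X; i.e., the quantity τ is densely invariant for bounded operators. -/

import Mathlib

/-- `inf_{m ∈ S_M} ‖Tm‖`, the infimum of `‖Tm‖` over the unit sphere of a subspace `M`. -/
noncomputable def sphereInf {X Y : Type*} [NormedAddCommGroup X] [NormedSpace ℝ X]
    [NormedAddCommGroup Y] [NormedSpace ℝ Y] (T : X →L[ℝ] Y) (M : Submodule ℝ X) : ℝ :=
  sInf {s : ℝ | ∃ m : X, m ∈ M ∧ ‖m‖ = 1 ∧ s = ‖T m‖}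

/-- `τ(T) = sup_{M ∈ I(X)} inf_{m ∈ S_M} ‖Tm‖`. -/
noncomputable def opTau {X Y : Type*} [NormedAddCommGroup X] [NormedSpace ℝ X]
    [NormedAddCommGroup Y] [NormedSpace ℝ Y] (T : X →L[ℝ] Y) : ℝ :=
  sSup {r : ℝ | ∃ M : Submodule ℝ X, ¬ FiniteDimensional ℝ M ∧ r = sphereInf T M}

section Aux

variable {X Y : Type*} [NormedAddCommGroup X] [NormedSpace ℝ X]
  [NormedAddCommGroup Y] [NormedSpace ℝ Y]

lemma exists_norm_one_of_not_fd {X : Type*} [NormedAddCommGroup X] [NormedSpace ℝ X]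
    {M : Submodule ℝ X} (hM : ¬ FiniteDimensional ℝ M) :
    ∃ m : X, m ∈ M ∧ ‖m‖ = 1 := by
  have hbot : M ≠ ⊥ := by
    rintro rfl
    exact hM inferInstance
  obtain ⟨x, hxM, hx0⟩ := Submodule.exists_mem_ne_zero_of_ne_bot hbot
  refine ⟨‖x‖⁻¹ • x, M.smul_mem _ hxM, ?_⟩
  rw [norm_smul, norm_inv, norm_norm, inv_mul_cancel₀ (norm_ne_zero_iff.mpr hx0)]

lemma not_fd_inf_ker {X : Type*} [NormedAddCommGroup X] [NormedSpace ℝ X]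
    {M : Submodule ℝ X} (hM : ¬ FiniteDimensional ℝ M) (f : X →L[ℝ] ℝ) :
    ¬ FiniteDimensional ℝ (M ⊓ LinearMap.ker (f : X →ₗ[ℝ] ℝ) : Submodule ℝ X) := by
  intro hfd
  apply hM
  set g : M →ₗ[ℝ] ℝ := f.toLinearMap.comp M.subtype with hg
  have hker : LinearMap.ker g = Submodule.comap M.subtype (LinearMap.ker f.toLinearMap) :=
    LinearMap.ker_comp _ _
  have e1 : (Submodule.comap M.subtype (LinearMap.ker f.toLinearMap)) ≃ₗ[ℝ]
      (M ⊓ LinearMap.ker (f : X →ₗ[ℝ] ℝ) : Submodule ℝ X) :=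
    (Submodule.equivMapOfInjective M.subtype M.injective_subtype _).trans
      (LinearEquiv.ofEq _ _ (Submodule.map_comap_subtype M _))
  have hkfd : FiniteDimensional ℝ (LinearMap.ker g) := by
    rw [hker]; exact Module.Finite.equiv e1.symm
  have h1 : Module.rank ℝ (LinearMap.range g) < Cardinal.aleph0 :=
    lt_of_le_of_lt ((Submodule.rank_le _).trans (le_of_eq (Module.rank_self ℝ)))
      Cardinal.one_lt_aleph0
  have h2 : Module.rank ℝ (LinearMap.ker g) < Cardinal.aleph0 :=
    Module.rank_lt_aleph0_iff.mpr inferInstance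
  have hrn := LinearMap.lift_rank_range_add_rank_ker g
  have : Module.rank ℝ M < Cardinal.aleph0 := by
    have : Cardinal.lift.{0} (Module.rank ℝ M) < Cardinal.aleph0 := by
      rw [← hrn]
      exact Cardinal.add_lt_aleph0 (by simpa using h1) (by simpa using h2)
    simpa using this
  exact Module.rank_lt_aleph0_iff.mp this

lemma sphereInf_nonneg (T : X →L[ℝ] Y) (M : Submodule ℝ X) : 0 ≤ sphereInf T M :=
  Real.sInf_nonneg fun s hs => by obtain ⟨m, _, _, rfl⟩ := hs; exact norm_nonneg _

lemma sphereInf_le (T : X →L[ℝ] Y) {M : Submodule ℝ X} {m : X} (hm : m ∈ M) (h1 : ‖m‖ = 1) :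
    sphereInf T M ≤ ‖T m‖ :=
  csInf_le ⟨0, fun s hs => by obtain ⟨m, _, _, rfl⟩ := hs; exact norm_nonneg _⟩ ⟨m, hm, h1, rfl⟩

lemma sphereInf_le_opNorm (T : X →L[ℝ] Y) {M : Submodule ℝ X}
    (hM : ¬ FiniteDimensional ℝ M) : sphereInf T M ≤ ‖T‖ := by
  obtain ⟨m, hm, h1⟩ := exists_norm_one_of_not_fd hM
  refine (sphereInf_le T hm h1).trans ?_
  simpa [h1] using T.le_opNorm m

lemma tauSet_bddAbove (T : X →L[ℝ] Y) :
    BddAbove {r : ℝ | ∃ M : Submodule ℝ X, ¬ FiniteDimensional ℝ M ∧ r = sphereInf T M} :=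
  ⟨‖T‖, fun r hr => by obtain ⟨M, hM, rfl⟩ := hr; exact sphereInf_le_opNorm T hM⟩

lemma key_lemma (T : X →L[ℝ] Y) (E : Submodule ℝ X) (hE : Dense (E : Set X))
    {M : Submodule ℝ X} (hM : ¬ FiniteDimensional ℝ M) {ε : ℝ} (hε : 0 < ε) :
    ∃ M' : Submodule ℝ E, ¬ FiniteDimensional ℝ M' ∧
      sphereInf T M - ε ≤ sphereInf (T.comp E.subtypeL) M' := by
  classical
  set c₀ := sphereInf T M with hc₀def
  have hc₀n : 0 ≤ c₀ := sphereInf_nonneg T M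
  have hc₀T : c₀ ≤ ‖T‖ := sphereInf_le_opNorm T hM
  set ε' : ℝ := min 2⁻¹ (ε / (2 * (‖T‖ + 1))) with hε'def
  have hTpos : (0:ℝ) < 2 * (‖T‖ + 1) := by positivity
  have hε' : 0 < ε' := lt_min (by norm_num) (div_pos hε hTpos)
  have hε'half : ε' ≤ 2⁻¹ := min_le_left _ _
  have hε'ε : 2 * (‖T‖ + 1) * ε' ≤ ε := by
    have h := min_le_right (2⁻¹:ℝ) (ε / (2 * (‖T‖ + 1)))
    calc 2 * (‖T‖ + 1) * ε' ≤ 2 * (‖T‖ + 1) * (ε / (2 * (‖T‖ + 1))) := by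
          exact mul_le_mul_of_nonneg_left h (le_of_lt hTpos)
      _ = ε := by field_simp
  -- norming functionals
  set φ : X → (X →L[ℝ] ℝ) := fun v =>
    if h : v = 0 then 0 else (exists_dual_vector ℝ v (norm_ne_zero_iff.mpr h)).choose with hφdef
  have hφ : ∀ v, v ≠ 0 → ‖φ v‖ = 1 ∧ φ v v = ‖v‖ := by
    intro v h
    simp only [hφdef, dif_neg h]
    exact (exists_dual_vector ℝ v (norm_ne_zero_iff.mpr h)).choose_spec
  -- picking unit vectors
  set pick : Submodule ℝ X → X := fun N =>
    if h : ∃ m, m ∈ N ∧ ‖m‖ = 1 then h.choose else 0 with hpickdef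
  have hpick : ∀ N : Submodule ℝ X, ¬ FiniteDimensional ℝ N → pick N ∈ N ∧ ‖pick N‖ = 1 := by
    intro N hN
    have h := exists_norm_one_of_not_fd hN
    simp only [hpickdef, dif_pos h]
    exact h.choose_spec
  -- decreasing sequence of subspaces
  set N : ℕ → Submodule ℝ X :=
    fun n => Nat.rec M (fun _ Np => Np ⊓ LinearMap.ker (φ (pick Np) : X →ₗ[ℝ] ℝ)) n with hNdef
  have hNsucc : ∀ n, N (n+1) = N n ⊓ LinearMap.ker (φ (pick (N n)) : X →ₗ[ℝ] ℝ) := fun n => rfl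
  have hNfd : ∀ n, ¬ FiniteDimensional ℝ (N n) := by
    intro n
    induction n with
    | zero => exact hM
    | succ n ih => exact not_fd_inf_ker ih _
  have hNanti : ∀ {m n : ℕ}, m ≤ n → N n ≤ N m := by
    intro m n h
    induction h with
    | refl => exact le_rfl
    | step _ ih => exact le_trans inf_le_left ih
  set x : ℕ → X := fun n => pick (N n) with hxdef
  have hx : ∀ n, x n ∈ N n ∧ ‖x n‖ = 1 := fun n => hpick _ (hNfd n)
  have hxne : ∀ n, x n ≠ 0 := fun n => by
    intro h; have := (hx n).2; rw [h, norm_zero] at this; norm_num at this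
  set f : ℕ → (X →L[ℝ] ℝ) := fun n => φ (x n) with hfdef
  have hfnorm : ∀ n, ‖f n‖ = 1 := fun n => (hφ _ (hxne n)).1
  have hfx : ∀ n, f n (x n) = 1 := fun n => by
    have := (hφ _ (hxne n)).2; rw [hfdef]; rw [this, (hx n).2]
  have hxM : ∀ n, x n ∈ M := fun n => hNanti (Nat.zero_le n) (hx n).1
  have htri : ∀ j i, j < i → f j (x i) = 0 := by
    intro j i hji
    have h2 : x i ∈ N (j+1) := hNanti hji (hx i).1
    rw [hNsucc j] at h2
    exact h2.2
  -- approximation from E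
  set δ : ℕ → ℝ := fun n => ε' / 4 * (4:ℝ)⁻¹ ^ n with hδdef
  have hδpos : ∀ n, 0 < δ n := fun n => by positivity
  have happrox : ∀ n, ∃ y, y ∈ E ∧ ‖y - x n‖ ≤ δ n := by
    intro n
    obtain ⟨y, hy1, hy2⟩ := hE.exists_dist_lt (x n) (hδpos n)
    exact ⟨y, hy1, by rw [← norm_sub_rev, ← dist_eq_norm]; exact hy2.le⟩
  choose e he1 he2 using happrox
  clear_value c₀ ε' φ pick N x f δ
  -- coefficient bound
  have claim1 : ∀ (a : ℕ → ℝ) (Q : ℕ), ∀ i < Q,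
      |a i| ≤ 2 ^ i * ‖∑ j ∈ Finset.range Q, a j • x j‖ := by
    intro a Q i
    induction i using Nat.strong_induction_on with
    | _ i ih =>
    intro hiQ
    set v := ∑ j ∈ Finset.range Q, a j • x j with hvdef
    have hfv : f i v = ∑ j ∈ Finset.range Q, a j * f i (x j) := by
      rw [hvdef, map_sum]
      exact Finset.sum_congr rfl fun j _ => by rw [map_smul, smul_eq_mul]
    have hsub : ∑ j ∈ Finset.range (i+1), a j * f i (x j)
        = ∑ j ∈ Finset.range Q, a j * f i (x j) := by
      refine Finset.sum_subset (Finset.range_subset_range.mpr hiQ) ?_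
      intro j hj hj'
      have : i < j := by
        simp only [Finset.mem_range] at hj hj'; omega
      rw [htri i j this, mul_zero]
    have hai : a i = f i v - ∑ j ∈ Finset.range i, a j * f i (x j) := by
      rw [hfv, ← hsub, Finset.sum_range_succ, hfx i]; ring
    have h1 : |f i v| ≤ ‖v‖ := by
      have := (f i).le_opNorm v
      rw [hfnorm i, one_mul] at this
      exact le_trans (le_of_eq (Real.norm_eq_abs _).symm) this
    have h2 : |∑ j ∈ Finset.range i, a j * f i (x j)|
        ≤ ∑ j ∈ Finset.range i, |a j| := by
      refine le_trans (Finset.abs_sum_le_sum_abs _ _) ?_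
      refine Finset.sum_le_sum fun j _ => ?_
      rw [abs_mul]
      have hb : |f i (x j)| ≤ 1 := by
        have := (f i).le_opNorm (x j)
        rw [hfnorm i, one_mul, (hx j).2] at this
        exact le_trans (le_of_eq (Real.norm_eq_abs _).symm) this
      calc |a j| * |f i (x j)| ≤ |a j| * 1 :=
            mul_le_mul_of_nonneg_left hb (abs_nonneg _)
        _ = |a j| := mul_one _
    have h3 : ∑ j ∈ Finset.range i, |a j| ≤ ∑ j ∈ Finset.range i, 2 ^ j * ‖v‖ := by
      refine Finset.sum_le_sum fun j hj => ?_
      have hji : j < i := Finset.mem_range.mp hj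
      exact ih j hji (lt_trans hji hiQ)
    have h4 : ∑ j ∈ Finset.range i, (2:ℝ) ^ j * ‖v‖ = (2 ^ i - 1) * ‖v‖ := by
      rw [← Finset.sum_mul, geom_sum_eq (by norm_num : (2:ℝ) ≠ 1) i]
      norm_num
    calc |a i| ≤ |f i v| + |∑ j ∈ Finset.range i, a j * f i (x j)| := by
          rw [hai]; exact abs_sub _ _
      _ ≤ ‖v‖ + (2 ^ i - 1) * ‖v‖ := by
          have := le_trans h2 (le_of_le_of_eq h3 h4)
          linarith
      _ = 2 ^ i * ‖v‖ := by ring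
  -- difference bound
  have claim2 : ∀ (a : ℕ → ℝ) (Q : ℕ),
      ‖(∑ j ∈ Finset.range Q, a j • e j) - ∑ j ∈ Finset.range Q, a j • x j‖
        ≤ ‖∑ j ∈ Finset.range Q, a j • x j‖ * (ε' / 2) := by
    intro a Q
    set v := ∑ j ∈ Finset.range Q, a j • x j with hvdef
    have hdiff : (∑ j ∈ Finset.range Q, a j • e j) - v
        = ∑ j ∈ Finset.range Q, a j • (e j - x j) := by
      rw [hvdef, ← Finset.sum_sub_distrib]
      exact Finset.sum_congr rfl fun j _ => (smul_sub _ _ _).symm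
    rw [hdiff]
    calc ‖∑ j ∈ Finset.range Q, a j • (e j - x j)‖
        ≤ ∑ j ∈ Finset.range Q, ‖a j • (e j - x j)‖ := norm_sum_le _ _
      _ ≤ ∑ j ∈ Finset.range Q, ‖v‖ * (ε' / 4) * (2:ℝ)⁻¹ ^ j := by
          refine Finset.sum_le_sum fun j hj => ?_
          rw [norm_smul, Real.norm_eq_abs]
          have hb1 : |a j| ≤ 2 ^ j * ‖v‖ := claim1 a Q j (Finset.mem_range.mp hj)
          have hb2 : ‖e j - x j‖ ≤ δ j := he2 j
          have := mul_le_mul hb1 hb2 (norm_nonneg _)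
            (by positivity : (0:ℝ) ≤ 2 ^ j * ‖v‖)
          refine this.trans (le_of_eq ?_)
          have h4 : (2:ℝ) ^ j * (4:ℝ)⁻¹ ^ j = (2:ℝ)⁻¹ ^ j := by
            rw [← mul_pow]; norm_num
          simp only [hδdef]
          calc 2 ^ j * ‖v‖ * (ε' / 4 * (4:ℝ)⁻¹ ^ j)
              = ‖v‖ * (ε' / 4) * ((2:ℝ) ^ j * (4:ℝ)⁻¹ ^ j) := by ring
            _ = ‖v‖ * (ε' / 4) * (2:ℝ)⁻¹ ^ j := by rw [h4]
      _ = ‖v‖ * (ε' / 4) * ∑ j ∈ Finset.range Q, (2:ℝ)⁻¹ ^ j := by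
          rw [Finset.mul_sum]
      _ ≤ ‖v‖ * (ε' / 4) * 2 := by
          refine mul_le_mul_of_nonneg_left ?_ (by positivity)
          have := sum_geometric_two_le Q
          simpa [one_div] using this
      _ = ‖v‖ * (ε' / 2) := by ring
  -- if the e-combination is zero then all coefficients vanish
  have claim3 : ∀ (a : ℕ → ℝ) (Q : ℕ),
      (∑ j ∈ Finset.range Q, a j • e j) = 0 → ∀ i < Q, a i = 0 := by
    intro a Q hzero i hiQ
    set v := ∑ j ∈ Finset.range Q, a j • x j with hvdef
    have h2 := claim2 a Q
    rw [hzero, zero_sub, norm_neg] at h2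
    have hv : ‖v‖ = 0 := by
      have h3 : ‖v‖ * (ε' / 2) ≤ ‖v‖ * (1 / 4) :=
        mul_le_mul_of_nonneg_left (by linarith) (norm_nonneg v)
      have h4 := norm_nonneg v
      linarith
    have := claim1 a Q i hiQ
    rw [hv, mul_zero] at this
    exact abs_nonpos_iff.mp this
  have hli : LinearIndependent ℝ e := by
    rw [linearIndependent_iff']
    intro s g hsum i hi
    obtain ⟨Q, hQ⟩ := s.exists_nat_subset_range
    set a : ℕ → ℝ := fun j => if j ∈ s then g j else 0 with hadef
    have hsum' : ∑ j ∈ Finset.range Q, a j • e j = 0 := by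
      have h1 : ∑ j ∈ Finset.range Q, a j • e j = ∑ j ∈ s, a j • e j :=
        (Finset.sum_subset hQ (fun j _ hj => by simp [hadef, hj])).symm
      rw [h1, ← hsum]
      exact Finset.sum_congr rfl fun j hj => by simp [hadef, hj]
    have := claim3 a Q hsum' i (Finset.mem_range.mp (hQ hi))
    simpa [hadef, hi] using this
  -- the candidate subspace of E
  set eE : ℕ → E := fun n => ⟨e n, he1 n⟩ with heEdef
  set M' : Submodule ℝ E := Submodule.span ℝ (Set.range eE) with hM'def
  have hliE : LinearIndependent ℝ eE := by
    apply LinearIndependent.of_comp E.subtype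
    convert hli using 1
    rfl
  have hM'fd : ¬ FiniteDimensional ℝ M' := by
    intro hfd
    set F : ℕ → M' := fun n => ⟨eE n, Submodule.subset_span ⟨n, rfl⟩⟩ with hFdef
    have hliF : LinearIndependent ℝ F := by
      apply LinearIndependent.of_comp M'.subtype
      convert hliE using 1
      rfl
    haveI : Finite ℕ := hliF.finite
    exact not_finite ℕ
  refine ⟨M', hM'fd, ?_⟩
  -- lower bound on the sphere infimum over M'
  have hbound : ∀ m : E, m ∈ M' → ‖m‖ = 1 → c₀ - ε ≤ ‖T (m : X)‖ := by
    intro m hm h1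
    have hmX : (m : X) ∈ Submodule.span ℝ (Set.range e) := by
      have h2 : (m : X) ∈ Submodule.map E.subtype M' := ⟨m, hm, rfl⟩
      rw [hM'def, Submodule.map_span, ← Set.range_comp] at h2
      exact h2
    obtain ⟨c, hc⟩ := Finsupp.mem_span_range_iff_exists_finsupp.mp hmX
    obtain ⟨Q, hQ⟩ := c.support.exists_nat_subset_range
    have hrep : ∑ j ∈ Finset.range Q, c j • e j = (m : X) := by
      rw [← hc]
      exact (Finsupp.sum_of_support_subset c hQ (fun i r => r • e i)
        (fun i _ => zero_smul ℝ (e i))).symm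
    set v := ∑ j ∈ Finset.range Q, (c j : ℝ) • x j with hvdef
    have hvM : v ∈ M := Submodule.sum_mem _ fun j _ => M.smul_mem _ (hxM j)
    have h2 := claim2 (fun j => c j) Q
    rw [hrep] at h2
    have hmnorm : ‖(m : X)‖ = 1 := by rw [← h1]; rfl
    have ht1 : ‖(m:X)‖ - ‖v‖ ≤ ‖(m:X) - v‖ := norm_sub_norm_le _ _
    have ht2 : ‖v‖ - ‖(m:X)‖ ≤ ‖(m:X) - v‖ := by
      rw [norm_sub_rev]; exact norm_sub_norm_le _ _
    have hq1 : ‖v‖ * (ε' / 2) ≤ ‖v‖ * (1 / 4) :=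
      mul_le_mul_of_nonneg_left (by linarith) (norm_nonneg v)
    have hvub : ‖v‖ ≤ 2 := by linarith
    have hq2 : ‖v‖ * (ε' / 2) ≤ 2 * (ε' / 2) :=
      mul_le_mul_of_nonneg_right hvub (by linarith)
    have hdiffε : ‖(m:X) - v‖ ≤ ε' := by linarith
    have hvlb : 1 - ε' ≤ ‖v‖ := by linarith
    have hvpos : 0 < ‖v‖ := by linarith
    have hvne : v ≠ 0 := fun h => by rw [h, norm_zero] at hvpos; exact lt_irrefl _ hvpos
    have hw : c₀ ≤ ‖T (‖v‖⁻¹ • v)‖ := by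
      rw [hc₀def]
      exact sphereInf_le T (m := ‖v‖⁻¹ • v) (M.smul_mem _ hvM)
        (by rw [norm_smul, norm_inv, norm_norm, inv_mul_cancel₀ (ne_of_gt hvpos)])
    have hTv : c₀ * ‖v‖ ≤ ‖T v‖ := by
      rw [map_smul, norm_smul, norm_inv, norm_norm] at hw
      have := mul_le_mul_of_nonneg_right hw (norm_nonneg v)
      calc c₀ * ‖v‖ ≤ ‖v‖⁻¹ * ‖T v‖ * ‖v‖ := this
        _ = ‖T v‖ := by field_simp
    have hTm : ‖T v‖ - ‖T‖ * ε' ≤ ‖T (m : X)‖ := by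
      have hd : ‖T v - T (m : X)‖ ≤ ‖T‖ * ε' := by
        rw [← map_sub]
        refine (T.le_opNorm _).trans ?_
        rw [norm_sub_rev]
        exact mul_le_mul_of_nonneg_left hdiffε (norm_nonneg _)
      have := norm_sub_norm_le (T v) (T (m : X))
      linarith
    have hfinal : c₀ * (1 - ε') - ‖T‖ * ε' ≤ ‖T (m : X)‖ := by
      have := mul_le_mul_of_nonneg_left hvlb hc₀n
      linarith
    have hcoef : (c₀ + ‖T‖) * ε' ≤ ε := by
      have h5 : c₀ + ‖T‖ ≤ 2 * (‖T‖ + 1) := by linarith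
      have := mul_le_mul_of_nonneg_right h5 hε'.le
      linarith
    have hexp1 : c₀ * (1 - ε') = c₀ - c₀ * ε' := by ring
    have hexp2 : (c₀ + ‖T‖) * ε' = c₀ * ε' + ‖T‖ * ε' := by ring
    linarith
  apply le_csInf
  · obtain ⟨m, hm, h1⟩ := exists_norm_one_of_not_fd hM'fd
    exact ⟨‖(T.comp E.subtypeL) m‖, m, hm, h1, rfl⟩
  · rintro b ⟨m, hm, h1, rfl⟩
    exact hbound m hm h1


end Aux

/-- `τ` is densely invariant: `τ(T|_E) = τ(T)` for any dense subspace `E`. -/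
theorem tau_densely_invariant {X Y : Type*} [NormedAddCommGroup X] [NormedSpace ℝ X]
    [NormedAddCommGroup Y] [NormedSpace ℝ Y] (hX : ¬ FiniteDimensional ℝ X)
    (T : X →L[ℝ] Y) (E : Submodule ℝ X) (hE : Dense (E : Set X)) :
    opTau (T.comp E.subtypeL) = opTau T := by
  classical
  have hEfd : ¬ FiniteDimensional ℝ E := by
    intro h
    have hclosed : IsClosed (E : Set X) := Submodule.closed_of_finiteDimensional E
    have huniv : (E : Set X) = Set.univ := by rw [← hclosed.closure_eq, hE.closure_eq]
    have hEtop : E = ⊤ := Submodule.eq_top_iff'.mpr fun x => by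
      rw [← SetLike.mem_coe, huniv]; trivial
    apply hX
    rw [hEtop] at h
    exact Module.Finite.equiv (Submodule.topEquiv)
  set SE := {r : ℝ | ∃ M' : Submodule ℝ E, ¬ FiniteDimensional ℝ M' ∧
    r = sphereInf (T.comp E.subtypeL) M'} with hSEdef
  set SX := {r : ℝ | ∃ M : Submodule ℝ X, ¬ FiniteDimensional ℝ M ∧
    r = sphereInf T M} with hSXdef
  have hSEne : SE.Nonempty :=
    ⟨_, ⊤, fun h => hEfd (Module.Finite.equiv Submodule.topEquiv), rfl⟩
  have hSXne : SX.Nonempty :=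
    ⟨_, ⊤, fun h => hX (Module.Finite.equiv Submodule.topEquiv), rfl⟩
  have hSEbdd : BddAbove SE := tauSet_bddAbove _
  have hSXbdd : BddAbove SX := tauSet_bddAbove _
  apply le_antisymm
  · apply csSup_le hSEne
    rintro r ⟨M', hM', rfl⟩
    have hMX : ¬ FiniteDimensional ℝ (Submodule.map E.subtype M') := fun h =>
      hM' (Module.Finite.equiv
        (Submodule.equivMapOfInjective E.subtype E.injective_subtype M').symm)
    have heq : sphereInf (T.comp E.subtypeL) M' = sphereInf T (Submodule.map E.subtype M') := by
      unfold sphereInf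
      congr 1
      ext s
      constructor
      · rintro ⟨m, hm, h1, rfl⟩
        exact ⟨(m : X), ⟨m, hm, rfl⟩, h1, rfl⟩
      · rintro ⟨mx, ⟨m, hm, rfl⟩, h1, rfl⟩
        exact ⟨m, hm, h1, rfl⟩
    rw [heq]
    exact le_csSup hSXbdd ⟨_, hMX, rfl⟩
  · apply csSup_le hSXne
    rintro r ⟨M, hM, rfl⟩
    refine le_of_forall_pos_le_add ?_
    intro ε hε
    obtain ⟨M', hM'fd, hM'⟩ := key_lemma T E hE hM hε
    have hle : sphereInf (T.comp E.subtypeL) M' ≤ sSup SE :=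
      le_csSup hSEbdd ⟨M', hM'fd, rfl⟩
    have hopE : opTau (T.comp E.subtypeL) = sSup SE := rfl
    rw [hopE]
    linarith
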